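/- arXiv:1609.05437 — 7 statements merged into one kernel-verified Lean document; each statement's English description precedes it below -/
import Mathlib

section
/- Let p > 1, let Ω ⊆ ℝ^N be open, let 0 < a ≤ ∞, let u : Ω → ℝ be a C² function with u(Ω) ⊆ (0, a), and let G : (0, a) → ℝ be a C² function with G' > 0 on (0, a). If x ∈ Ω and ∇u(x) ≠ 0, then the flux of G∘u is differentiable at x and Δ_p(G∘u)(x) = (p−1)·G''(u(x))·G'(u(x))^{p−2}·‖∇u(x)‖^p + G'(u(x))^{p−1}·Δ_p u(x). -/
open Real Set Metric MeasureTheory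

/-- The "flux" of `u` at `x`: `‖∇u(x)‖^(p-2) ∇u(x)` (equal to `0` when `∇u(x) = 0`,
by the junk-value conventions of `Real.rpow`, since `p ≠ 2` gives `0 ^ (p-2) = 0` and
for `p = 2` the scalar multiplies the zero vector). -/
noncomputable def flux {N : ℕ} (p : ℝ) (u : EuclideanSpace ℝ (Fin N) → ℝ)
    (x : EuclideanSpace ℝ (Fin N)) : EuclideanSpace ℝ (Fin N) :=
  ‖gradient u x‖ ^ (p - 2) • gradient u x

/-- The divergence of a vector field `V` at `x`: `∑ i, ∂V_i/∂x_i (x)`. -/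
noncomputable def pdiv {N : ℕ} (V : EuclideanSpace ℝ (Fin N) → EuclideanSpace ℝ (Fin N))
    (x : EuclideanSpace ℝ (Fin N)) : ℝ :=
  ∑ i : Fin N, fderiv ℝ V x (EuclideanSpace.single i 1) i

section aux

variable {N : ℕ}

lemma grad_comp_aux {u : EuclideanSpace ℝ (Fin N) → ℝ} {G : ℝ → ℝ} {g' : ℝ}
    {y : EuclideanSpace ℝ (Fin N)} (hu : DifferentiableAt ℝ u y)
    (hG : HasDerivAt G g' (u y)) :
    HasGradientAt (G ∘ u) (g' • gradient u y) y := by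
  have h1 : HasFDerivAt (G ∘ u) (g' • fderiv ℝ u y) y :=
    hG.comp_hasFDerivAt y hu.hasFDerivAt
  have h2 := h1.hasGradientAt
  rwa [_root_.map_smul] at h2

lemma fderiv_apply_single {u : EuclideanSpace ℝ (Fin N) → ℝ}
    {y : EuclideanSpace ℝ (Fin N)} (hu : DifferentiableAt ℝ u y) (i : Fin N) :
    fderiv ℝ u y (EuclideanSpace.single i 1) = gradient u y i := by
  have : fderiv ℝ u y = InnerProductSpace.toDual ℝ _ (gradient u y) := by
    simp [gradient]
  rw [this, InnerProductSpace.toDual_apply_apply, EuclideanSpace.inner_single_right]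
  simp

end aux

/-- chain-rule formula for the `p`-Laplacian of `G ∘ u` at a point where
`∇u(x) ≠ 0`, for `u` of class `C²` on the open set `Ω` with values in `(0, a)` and
`G` of class `C²` on `(0, a)` with `G' > 0`. -/
theorem stmt0 {N : ℕ} (p : ℝ) (hp : 1 < p)
    (Ω : Set (EuclideanSpace ℝ (Fin N))) (hΩ : IsOpen Ω)
    (a : EReal) (ha : 0 < a)
    (u : EuclideanSpace ℝ (Fin N) → ℝ) (hu : ContDiffOn ℝ 2 u Ω)
    (hmap : ∀ y ∈ Ω, 0 < u y ∧ (u y : EReal) < a)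
    (G : ℝ → ℝ) (hG : ContDiffOn ℝ 2 G {t : ℝ | 0 < t ∧ (t : EReal) < a})
    (hG' : ∀ t : ℝ, 0 < t → (t : EReal) < a → 0 < deriv G t)
    (x : EuclideanSpace ℝ (Fin N)) (hx : x ∈ Ω) (hgrad : gradient u x ≠ 0) :
    DifferentiableAt ℝ (flux p (G ∘ u)) x ∧
    pdiv (flux p (G ∘ u)) x =
      (p - 1) * deriv (deriv G) (u x) * deriv G (u x) ^ (p - 2) * ‖gradient u x‖ ^ p
        + deriv G (u x) ^ (p - 1) * pdiv (flux p u) x := by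
  classical
  set s : Set ℝ := {t : ℝ | 0 < t ∧ (t : EReal) < a} with hs_def
  have hsopen : IsOpen s := by
    have h1 : IsOpen {t : ℝ | 0 < t} := isOpen_lt continuous_const continuous_id
    have h2 : IsOpen {t : ℝ | (t : EReal) < a} :=
      isOpen_lt continuous_coe_real_ereal continuous_const
    exact h1.inter h2
  have hux : u x ∈ s := ⟨(hmap x hx).1, (hmap x hx).2⟩
  -- continuity of the gradient on Ω
  have hfc : ContinuousOn (fderiv ℝ u) Ω :=
    hu.continuousOn_fderiv_of_isOpen hΩ (by norm_num)
  have hgc : ContinuousOn (gradient u) Ω := by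
    have : ContinuousOn (fun y => (InnerProductSpace.toDual ℝ
        (EuclideanSpace ℝ (Fin N))).symm (fderiv ℝ u y)) Ω :=
      (InnerProductSpace.toDual ℝ _).symm.continuous.comp_continuousOn hfc
    exact this
  -- an open neighborhood of x where things are nice
  have hUopen : IsOpen (Ω ∩ gradient u ⁻¹' {(0 : EuclideanSpace ℝ (Fin N))}ᶜ) :=
    hgc.isOpen_inter_preimage hΩ isOpen_compl_singleton
  have hxU : x ∈ Ω ∩ gradient u ⁻¹' {(0 : EuclideanSpace ℝ (Fin N))}ᶜ :=
    ⟨hx, hgrad⟩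
  -- the key local identity
  have hev : flux p (G ∘ u) =ᶠ[nhds x] fun y => deriv G (u y) ^ (p - 1) • flux p u y := by
    filter_upwards [hUopen.mem_nhds hxU] with y hy
    obtain ⟨hyΩ, hgy⟩ := hy
    have hgy : gradient u y ≠ 0 := hgy
    have huys : u y ∈ s := ⟨(hmap y hyΩ).1, (hmap y hyΩ).2⟩
    have hcy : 0 < deriv G (u y) := hG' _ huys.1 huys.2
    have hud : DifferentiableAt ℝ u y :=
      (hu.contDiffAt (hΩ.mem_nhds hyΩ)).differentiableAt (by norm_num)
    have hGd : HasDerivAt G (deriv G (u y)) (u y) :=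
      (((hG.contDiffAt (hsopen.mem_nhds huys)).differentiableAt (by norm_num))).hasDerivAt
    have hgrad_comp : gradient (G ∘ u) y = deriv G (u y) • gradient u y :=
      (grad_comp_aux hud hGd).gradient
    have hng : (0:ℝ) < ‖gradient u y‖ := norm_pos_iff.mpr hgy
    simp only [flux, hgrad_comp]
    rw [norm_smul, Real.norm_eq_abs, abs_of_pos hcy,
      Real.mul_rpow hcy.le (norm_nonneg _), smul_smul, smul_smul]
    congr 1
    have h1 : deriv G (u y) ^ (p - 2) * deriv G (u y) = deriv G (u y) ^ (p - 1) := by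
      nth_rewrite 2 [← Real.rpow_one (deriv G (u y))]
      rw [← Real.rpow_add hcy]
      ring_nf
    calc deriv G (u y) ^ (p - 2) * ‖gradient u y‖ ^ (p - 2) * deriv G (u y)
        = (deriv G (u y) ^ (p - 2) * deriv G (u y)) * ‖gradient u y‖ ^ (p - 2) := by ring
      _ = deriv G (u y) ^ (p - 1) * ‖gradient u y‖ ^ (p - 2) := by rw [h1]
  -- differentiability data at x
  have hcx : 0 < deriv G (u x) := hG' _ hux.1 hux.2
  have hnx : (0:ℝ) < ‖gradient u x‖ := norm_pos_iff.mpr hgrad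
  have hudx : DifferentiableAt ℝ u x :=
    (hu.contDiffAt (hΩ.mem_nhds hx)).differentiableAt (by norm_num)
  have hgradd : DifferentiableAt ℝ (gradient u) x := by
    have h1 : ContDiffOn ℝ 1 (fderiv ℝ u) Ω := hu.fderiv_of_isOpen hΩ (by norm_num)
    have h2 : DifferentiableAt ℝ (fderiv ℝ u) x :=
      (h1.contDiffAt (hΩ.mem_nhds hx)).differentiableAt one_ne_zero
    exact ((InnerProductSpace.toDual ℝ _).symm.toContinuousLinearEquiv
      : (EuclideanSpace ℝ (Fin N) →L[ℝ] ℝ) ≃L[ℝ] _).differentiableAt.comp x h2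
  have hFd : DifferentiableAt ℝ (flux p u) x := by
    have hnorm : DifferentiableAt ℝ (fun y => ‖gradient u y‖) x :=
      hgradd.norm ℝ hgrad
    exact (hnorm.rpow_const (Or.inl hnx.ne')).smul hgradd
  -- derivative of deriv G at u x
  have hG1 : ContDiffOn ℝ 1 (deriv G) s := hG.deriv_of_isOpen hsopen (by norm_num)
  have hG2 : HasDerivAt (deriv G) (deriv (deriv G) (u x)) (u x) :=
    ((hG1.contDiffAt (hsopen.mem_nhds hux)).differentiableAt one_ne_zero).hasDerivAt
  set d : ℝ := deriv (deriv G) (u x) * (p - 1) * deriv G (u x) ^ (p - 1 - 1) with hd_def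
  have hφ : HasDerivAt (fun t => deriv G t ^ (p - 1)) d (u x) :=
    hG2.rpow_const (Or.inl hcx.ne')
  have hc : HasFDerivAt (fun y => deriv G (u y) ^ (p - 1)) (d • fderiv ℝ u x) x :=
    hφ.comp_hasFDerivAt x hudx.hasFDerivAt
  -- differentiability of flux p (G ∘ u)
  have hdiff : DifferentiableAt ℝ (flux p (G ∘ u)) x :=
    (hc.differentiableAt.smul hFd).congr_of_eventuallyEq hev
  refine ⟨hdiff, ?_⟩
  -- compute the fderiv
  have hfd : fderiv ℝ (flux p (G ∘ u)) x
      = deriv G (u x) ^ (p - 1) • fderiv ℝ (flux p u) x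
        + (d • fderiv ℝ u x).smulRight (flux p u x) := by
    rw [hev.fderiv_eq, fderiv_fun_smul hc.differentiableAt hFd, hc.fderiv]
  have key : ∀ i : Fin N,
      fderiv ℝ (flux p (G ∘ u)) x (EuclideanSpace.single i 1) i
        = deriv G (u x) ^ (p - 1) * fderiv ℝ (flux p u) x (EuclideanSpace.single i 1) i
          + d * gradient u x i * (‖gradient u x‖ ^ (p - 2) * gradient u x i) := by
    intro i
    rw [hfd]
    rw [ContinuousLinearMap.add_apply, ContinuousLinearMap.smul_apply,
      ContinuousLinearMap.smulRight_apply, ContinuousLinearMap.smul_apply,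
      PiLp.add_apply, PiLp.smul_apply, PiLp.smul_apply, smul_eq_mul, smul_eq_mul,
      fderiv_apply_single hudx i]
    simp only [flux, PiLp.smul_apply, smul_eq_mul]
    try ring
  have hsum : pdiv (flux p (G ∘ u)) x
      = deriv G (u x) ^ (p - 1) * pdiv (flux p u) x
        + d * (‖gradient u x‖ ^ (p - 2) * ∑ i, gradient u x i * gradient u x i) := by
    simp only [pdiv, key]
    rw [Finset.sum_add_distrib, ← Finset.mul_sum]
    congr 1
    rw [Finset.mul_sum, Finset.mul_sum]
    exact Finset.sum_congr rfl fun i _ => by ring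
  have hinner : ∑ i, gradient u x i * gradient u x i = ‖gradient u x‖ ^ (2:ℕ) := by
    rw [← real_inner_self_eq_norm_sq]
    simp [PiLp.inner_apply, RCLike.inner_apply]
    rw [EuclideanSpace.norm_sq_eq]
    simp [sq]
  have hnp : ‖gradient u x‖ ^ (p - 2) * ‖gradient u x‖ ^ (2:ℕ) = ‖gradient u x‖ ^ p := by
    rw [← Real.rpow_natCast ‖gradient u x‖ 2, ← Real.rpow_add hnx]
    norm_num
  have hcp : deriv G (u x) ^ (p - 1 - 1) = deriv G (u x) ^ (p - 2) := by
    have h11 : p - 1 - 1 = p - 2 := by ring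
    rw [h11]
  rw [hsum, hinner, hnp, hd_def, hcp]
  ring
end

section
/- Let p > 1, let Ω ⊆ ℝ^N be open, let 0 < a ≤ ∞, let u : Ω → ℝ be a C² function with u(Ω) ⊆ (0, a), and let G : (0, a) → ℝ be a C² function that is increasing and concave, i.e. G' > 0 and G'' ≤ 0 on (0, a). If x ∈ Ω and ∇u(x) ≠ 0, then the flux of G∘u is differentiable at x and −Δ_p(G∘u)(x) ≥ G'(u(x))^{p−1}·(−Δ_p u(x)). -/
open Real Set Metric MeasureTheory
open Topology

/-- Lemma 2.1: for `u` of class `C²` on the open set `Ω` with values in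
`(0, a)` and `G` of class `C²` on `(0, a)` increasing and concave (`G' > 0`, `G'' ≤ 0`),
at any `x ∈ Ω` with `∇u(x) ≠ 0` one has `-Δ_p(G∘u)(x) ≥ G'(u(x))^(p-1) (-Δ_p u(x))`. -/
theorem stmt1 {N : ℕ} (p : ℝ) (hp : 1 < p)
    (Ω : Set (EuclideanSpace ℝ (Fin N))) (hΩ : IsOpen Ω)
    (a : EReal) (ha : 0 < a)
    (u : EuclideanSpace ℝ (Fin N) → ℝ) (hu : ContDiffOn ℝ 2 u Ω)
    (hmap : ∀ y ∈ Ω, 0 < u y ∧ (u y : EReal) < a)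
    (G : ℝ → ℝ) (hG : ContDiffOn ℝ 2 G {t : ℝ | 0 < t ∧ (t : EReal) < a})
    (hG' : ∀ t : ℝ, 0 < t → (t : EReal) < a → 0 < deriv G t)
    (hG'' : ∀ t : ℝ, 0 < t → (t : EReal) < a → deriv (deriv G) t ≤ 0)
    (x : EuclideanSpace ℝ (Fin N)) (hx : x ∈ Ω) (hgrad : gradient u x ≠ 0) :
    DifferentiableAt ℝ (flux p (G ∘ u)) x ∧
    -pdiv (flux p (G ∘ u)) x ≥ deriv G (u x) ^ (p - 1) * (-pdiv (flux p u) x) := by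
  classical
  have hSopen : IsOpen {t : ℝ | 0 < t ∧ (t : EReal) < a} :=
    (isOpen_lt continuous_const continuous_id).and
      (isOpen_lt continuous_coe_real_ereal continuous_const)
  have hux : ContDiffAt ℝ 2 u x := hu.contDiffAt (hΩ.mem_nhds hx)
  -- the gradient of u is C¹ near x
  have hgc : ContDiffAt ℝ 1 (fun y => gradient u y) x := by
    have h1 : ContDiffAt ℝ 1 (fderiv ℝ u) x := hux.fderiv_right (by norm_num)
    exact (((InnerProductSpace.toDual ℝ
      (EuclideanSpace ℝ (Fin N))).symm.toContinuousLinearEquiv.toContinuousLinearMap.contDiff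
      (n := 1)).comp_contDiffAt x h1)
  have hgd : DifferentiableAt ℝ (fun y => gradient u y) x := hgc.differentiableAt (by norm_num)
  set c := deriv G (u x) with hc_def
  have huxS := hmap x hx
  have hc : 0 < c := hG' _ huxS.1 huxS.2
  have hG1 : ContDiffOn ℝ 1 (deriv G) {t : ℝ | 0 < t ∧ (t : EReal) < a} :=
    hG.deriv_of_isOpen hSopen (by norm_num)
  have hG'x : DifferentiableAt ℝ (deriv G) (u x) :=
    (hG1.contDiffAt (hSopen.mem_nhds huxS)).differentiableAt (by norm_num)
  have hdu : HasFDerivAt u (fderiv ℝ u x) x :=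
    (hux.differentiableAt (by norm_num)).hasFDerivAt
  set k : ℝ := (p - 1) * c ^ (p - 2) * deriv (deriv G) (u x) with hk_def
  have hrp : HasDerivAt (fun t : ℝ => t ^ (p - 1)) ((p - 1) * c ^ (p - 2)) c := by
    have h := Real.hasDerivAt_rpow_const (x := c) (p := p - 1) (Or.inl hc.ne')
    have : p - 1 - 1 = p - 2 := by ring
    rwa [this] at h
  have hGd2 : HasDerivAt (deriv G) (deriv (deriv G) (u x)) (u x) := hG'x.hasDerivAt
  have hcomp1 : HasDerivAt (fun t => deriv G t ^ (p - 1)) k (u x) := by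
    have h := hrp.comp (u x) hGd2
    exact h
  have hh : HasFDerivAt (fun y => deriv G (u y) ^ (p - 1)) (k • fderiv ℝ u x) x := by
    have h := hcomp1.comp_hasFDerivAt x hdu
    exact h
  have hhd : DifferentiableAt ℝ (fun y => deriv G (u y) ^ (p - 1)) x := hh.differentiableAt
  -- flux p u is differentiable at x
  have hnorm1 : DifferentiableAt ℝ (fun y => ‖gradient u y‖) x :=
    hgd.norm ℝ hgrad
  have hnorm : DifferentiableAt ℝ (fun y => ‖gradient u y‖ ^ (p - 2)) x :=
    by have h := (Real.differentiableAt_rpow_const_of_ne (p - 2) (norm_ne_zero_iff.mpr hgrad)).comp x hnorm1; exact h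
  have hFd : DifferentiableAt ℝ (flux p u) x := by
    unfold flux
    exact hnorm.smul hgd
  -- local identity : flux p (G ∘ u) = (deriv G ∘ u)^(p-1) • flux p u near x
  have ev : flux p (G ∘ u) =ᶠ[𝓝 x] fun y => deriv G (u y) ^ (p - 1) • flux p u y := by
    filter_upwards [hΩ.mem_nhds hx, hgc.continuousAt.eventually_ne hgrad] with y hyΩ hgy
    have huyS := hmap y hyΩ
    have hcy : 0 < deriv G (u y) := hG' _ huyS.1 huyS.2
    have hduy : HasFDerivAt u (fderiv ℝ u y) y :=
      ((hu.contDiffAt (hΩ.mem_nhds hyΩ)).differentiableAt (by norm_num)).hasFDerivAt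
    have hGy : HasDerivAt G (deriv G (u y)) (u y) :=
      ((hG.contDiffAt (hSopen.mem_nhds huyS)).differentiableAt (by norm_num)).hasDerivAt
    have hfd : fderiv ℝ (G ∘ u) y = deriv G (u y) • fderiv ℝ u y :=
      (hGy.comp_hasFDerivAt y hduy).fderiv
    have hgradGu : gradient (G ∘ u) y = deriv G (u y) • gradient u y := by
      unfold gradient
      rw [hfd]; simp
    simp only [flux]
    rw [hgradGu, norm_smul, Real.norm_of_nonneg hcy.le,
      Real.mul_rpow hcy.le (norm_nonneg _), smul_smul, smul_smul]
    congr 1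
    have h1 : deriv G (u y) ^ (p - 1) = deriv G (u y) ^ (p - 2) * deriv G (u y) := by
      rw [← Real.rpow_add_one hcy.ne' (p - 2)]
      congr 1
      ring
    rw [h1]; ring
  have hsd : DifferentiableAt ℝ (fun y => deriv G (u y) ^ (p - 1) • flux p u y) x :=
    hhd.smul hFd
  have hdiff : DifferentiableAt ℝ (flux p (G ∘ u)) x :=
    ev.differentiableAt_iff.mpr hsd
  have hfderiv : fderiv ℝ (flux p (G ∘ u)) x
      = c ^ (p - 1) • fderiv ℝ (flux p u) x + (k • fderiv ℝ u x).smulRight (flux p u x) := by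
    rw [ev.fderiv_eq, fderiv_fun_smul hhd hFd, hh.fderiv]
  have happ : ∀ i : Fin N, fderiv ℝ u x (EuclideanSpace.single i 1) = gradient u x i := by
    intro i
    have hd : fderiv ℝ u x = InnerProductSpace.toDual ℝ _ (gradient u x) := by
      unfold gradient; rw [LinearIsometryEquiv.apply_symm_apply]
    rw [hd, InnerProductSpace.toDual_apply_apply, EuclideanSpace.inner_single_right]
    simp
  have hpdiv : pdiv (flux p (G ∘ u)) x
      = c ^ (p - 1) * pdiv (flux p u) x
        + ∑ i : Fin N, k * (gradient u x i * flux p u x i) := by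
    unfold pdiv
    rw [hfderiv, Finset.mul_sum, ← Finset.sum_add_distrib]
    refine Finset.sum_congr rfl fun i _ => ?_
    rw [ContinuousLinearMap.add_apply, ContinuousLinearMap.smul_apply,
      ContinuousLinearMap.smulRight_apply, ContinuousLinearMap.smul_apply, happ i]
    simp [PiLp.add_apply, PiLp.smul_apply, smul_eq_mul]
    ring
  refine ⟨hdiff, ?_⟩
  have hk_nonpos : k ≤ 0 := by
    have h1 : 0 ≤ (p - 1) * c ^ (p - 2) := by
      have := Real.rpow_nonneg hc.le (p - 2)
      nlinarith
    exact mul_nonpos_of_nonneg_of_nonpos h1 (hG'' _ huxS.1 huxS.2)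
  have hcross : ∑ i : Fin N, k * (gradient u x i * flux p u x i) ≤ 0 := by
    refine Finset.sum_nonpos fun i _ => ?_
    refine mul_nonpos_of_nonpos_of_nonneg hk_nonpos ?_
    have hfl : flux p u x i = ‖gradient u x‖ ^ (p - 2) * gradient u x i := by
      simp [flux, PiLp.smul_apply, smul_eq_mul]
    rw [hfl]
    have h1 : 0 ≤ ‖gradient u x‖ ^ (p - 2) := Real.rpow_nonneg (norm_nonneg _) _
    nlinarith [sq_nonneg (gradient u x i)]
  rw [hpdiv]
  nlinarith [hcross]
end

section
/- Let p > 1, N ≥ 1, α > 0 and R > 0, and define ψ : ℝ^N → ℝ by ψ(x) = ((p−1)/(α+p))·(α+N)^{−1/(p−1)}·(R^{(α+p)/(p−1)} − ‖x‖^{(α+p)/(p−1)}). Then ψ is differentiable, for every x ∈ ℝ^N the flux of ψ at x equals −‖x‖^α x/(α+N), this flux vector field is differentiable with divergence −‖x‖^α (so −Δ_p ψ(x) = ‖x‖^α for all x), and ψ(x) = 0 whenever ‖x‖ = R. -/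
open Real Set Metric MeasureTheory Asymptotics

variable {N : ℕ}

local notation "E" => EuclideanSpace ℝ (Fin N)

-- little-o lemma
lemma aux_isLittleO (s : ℝ) (hs : 0 < s) :
    (fun y : E => ‖y‖ ^ (s + 1)) =o[nhds (0 : E)] fun y => y := by
  rw [isLittleO_iff]
  intro ε hε
  have hδ : 0 < ε ^ (1 / s) := Real.rpow_pos_of_pos hε _
  filter_upwards [Metric.ball_mem_nhds (0 : E) hδ] with y hy
  rw [mem_ball_zero_iff] at hy
  rcases eq_or_ne y 0 with rfl | hy0
  · simp [Real.zero_rpow (by positivity : s + 1 ≠ 0)]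
  · have hny : 0 < ‖y‖ := norm_pos_iff.mpr hy0
    have h1 : ‖y‖ ^ (s + 1) = ‖y‖ ^ s * ‖y‖ := by
      rw [Real.rpow_add hny, Real.rpow_one]
    have h2 : ‖y‖ ^ s ≤ ε := by
      calc ‖y‖ ^ s ≤ (ε ^ (1 / s)) ^ s :=
            Real.rpow_le_rpow (norm_nonneg _) hy.le hs.le
        _ = ε := by
            rw [← Real.rpow_mul hε.le, one_div, inv_mul_cancel₀ hs.ne', Real.rpow_one]
    rw [Real.norm_of_nonneg (by positivity), h1]
    exact mul_le_mul_of_nonneg_right h2 (norm_nonneg _)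

-- derivative of ‖·‖^r away from 0
lemma aux_hasFDerivAt_norm_rpow (r : ℝ) {x : E} (hx : x ≠ 0) :
    HasFDerivAt (fun y : E => ‖y‖ ^ r) ((r * ‖x‖ ^ (r - 2)) • (innerSL ℝ x)) x := by
  have hnx : 0 < ‖x‖ := norm_pos_iff.mpr hx
  have h1 : HasFDerivAt (fun y : E => (inner ℝ y y : ℝ))
      ((fderivInnerCLM ℝ (x, x)).comp
        ((ContinuousLinearMap.id ℝ E).prod (ContinuousLinearMap.id ℝ E))) x :=
    (hasFDerivAt_id x).inner ℝ (hasFDerivAt_id x)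
  have hxx : (inner ℝ x x : ℝ) ≠ 0 := by
    rw [real_inner_self_eq_norm_sq]; positivity
  have h2 := HasDerivAt.comp_hasFDerivAt (f := fun y : E => (inner ℝ y y : ℝ))
      x (Real.hasDerivAt_rpow_const (p := r / 2) (Or.inl hxx)) h1
  have hfun : (fun y : E => (inner ℝ y y : ℝ) ^ (r / 2)) = fun y : E => ‖y‖ ^ r := by
    funext y
    rw [real_inner_self_eq_norm_sq, ← Real.rpow_natCast ‖y‖ 2, ← Real.rpow_mul (norm_nonneg _),
      show ((2 : ℕ) : ℝ) * (r / 2) = r by push_cast; ring]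
  simp only [Function.comp_def] at h2
  rw [hfun] at h2
  refine h2.congr_fderiv (Eq.symm ?_)
  ext v
  simp only [ContinuousLinearMap.smul_apply, ContinuousLinearMap.coe_comp', Function.comp_apply,
    ContinuousLinearMap.prod_apply, ContinuousLinearMap.coe_id', id_eq, fderivInnerCLM_apply,
    innerSL_apply_apply, smul_eq_mul]
  rw [real_inner_comm v x, real_inner_self_eq_norm_sq]
  have : (‖x‖ ^ 2 : ℝ) ^ (r / 2 - 1) = ‖x‖ ^ (r - 2) := by
    rw [← Real.rpow_natCast ‖x‖ 2, ← Real.rpow_mul (norm_nonneg _)]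
    rw [show ((2 : ℕ) : ℝ) * (r / 2 - 1) = r - 2 by push_cast; ring]
  rw [this]; ring

lemma aux_W_zero (r : ℝ) (hr : 0 < r) :
    HasFDerivAt (fun y : E => ‖y‖ ^ r • y) (0 : E →L[ℝ] E) 0 := by
  rw [hasFDerivAt_iff_isLittleO_nhds_zero]
  have heq : (fun h : E => (fun y : E => ‖y‖ ^ r • y) (0 + h) - (fun y : E => ‖y‖ ^ r • y) 0
      - (0 : E →L[ℝ] E) h) = fun h : E => ‖h‖ ^ r • h := by
    funext h
    simp
  rw [heq, ← isLittleO_norm_left]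
  have heq2 : (fun h : E => ‖‖h‖ ^ r • h‖) = fun h : E => ‖h‖ ^ (r + 1) := by
    funext h
    rcases eq_or_ne h 0 with rfl | hh
    · simp [Real.zero_rpow (by positivity : r + 1 ≠ 0)]
    · rw [norm_smul, Real.norm_of_nonneg (Real.rpow_nonneg (norm_nonneg _) _),
        Real.rpow_add_one (norm_ne_zero_iff.mpr hh)]
  rw [heq2]
  exact aux_isLittleO r hr


/-- the function
`ψ(x) = ((p-1)/(α+p)) (α+N)^(-1/(p-1)) (R^((α+p)/(p-1)) - ‖x‖^((α+p)/(p-1)))`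
is differentiable, its flux is `-‖x‖^α x/(α+N)`, this flux field is differentiable
with divergence `-‖x‖^α` (so `-Δ_p ψ(x) = ‖x‖^α`), and `ψ` vanishes on `‖x‖ = R`. -/
theorem stmt5 {N : ℕ} (hN : 1 ≤ N) (p : ℝ) (hp : 1 < p)
    (α : ℝ) (hα : 0 < α) (R : ℝ) (hR : 0 < R)
    (ψ : EuclideanSpace ℝ (Fin N) → ℝ)
    (hψ : ψ = fun x => ((p - 1) / (α + p)) * (α + (N : ℝ)) ^ (-(1 / (p - 1))) *
      (R ^ ((α + p) / (p - 1)) - ‖x‖ ^ ((α + p) / (p - 1)))) :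
    Differentiable ℝ ψ ∧
    (∀ x, flux p ψ x = (-(‖x‖ ^ α / (α + (N : ℝ)))) • x) ∧
    Differentiable ℝ (flux p ψ) ∧
    (∀ x, pdiv (flux p ψ) x = -‖x‖ ^ α) ∧
    (∀ x, ‖x‖ = R → ψ x = 0) := by
  have hp1 : (0:ℝ) < p - 1 := by linarith
  have hαp : (0:ℝ) < α + p := by linarith
  have hαN : (0:ℝ) < α + (N:ℝ) := by
    have : (1:ℝ) ≤ (N:ℝ) := by exact_mod_cast hN
    linarith
  set β := (α + p) / (p - 1) with hβdef
  set K := (α + (N:ℝ)) ^ (-(1 / (p - 1))) with hKdef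
  set c := (p - 1) / (α + p) * K with hcdef
  have hβp : β * (p - 1) = α + p := div_mul_cancel₀ _ hp1.ne'
  have hβ1 : 1 < β := by rw [hβdef, lt_div_iff₀ hp1]; linarith
  have hK : 0 < K := Real.rpow_pos_of_pos hαN _
  have hcβ : c * β = K := by
    rw [hcdef, hβdef]; field_simp
  have hΨ : ψ = fun x : EuclideanSpace ℝ (Fin N) => c * (R ^ β - ‖x‖ ^ β) := hψ
  subst hΨ
  -- gradient computation
  have hgrad : ∀ x : EuclideanSpace ℝ (Fin N),
      HasGradientAt (fun x : EuclideanSpace ℝ (Fin N) => c * (R ^ β - ‖x‖ ^ β))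
        ((-(K * ‖x‖ ^ (β - 2))) • x) x := by
    intro x
    rcases eq_or_ne x 0 with rfl | hx
    · rw [smul_zero, hasGradientAt_iff_hasFDerivAt, map_zero,
        hasFDerivAt_iff_isLittleO_nhds_zero]
      have heq : (fun h : EuclideanSpace ℝ (Fin N) =>
          (fun x : EuclideanSpace ℝ (Fin N) => c * (R ^ β - ‖x‖ ^ β)) (0 + h)
          - (fun x : EuclideanSpace ℝ (Fin N) => c * (R ^ β - ‖x‖ ^ β)) 0
          - (0 : EuclideanSpace ℝ (Fin N) →L[ℝ] ℝ) h)
          = fun h : EuclideanSpace ℝ (Fin N) => (-c) * ‖h‖ ^ ((β - 1) + 1) := by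
        funext h
        simp [Real.zero_rpow (by positivity : β ≠ 0), sub_add_cancel]
        ring
      rw [heq]
      exact (aux_isLittleO (β - 1) (by linarith)).const_mul_left (-c)
    · rw [hasGradientAt_iff_hasFDerivAt]
      have h1 := ((aux_hasFDerivAt_norm_rpow β hx).const_sub (R ^ β)).const_mul c
      refine h1.congr_fderiv (Eq.symm ?_)
      ext v
      simp only [InnerProductSpace.toDual_apply_apply, ContinuousLinearMap.smul_apply,
        ContinuousLinearMap.neg_apply, innerSL_apply_apply, smul_eq_mul,
        real_inner_smul_left]
      linear_combination (‖x‖ ^ (β - 2) * (inner ℝ x v : ℝ)) * hcβ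
  have hgradval : ∀ x : EuclideanSpace ℝ (Fin N),
      gradient (fun x : EuclideanSpace ℝ (Fin N) => c * (R ^ β - ‖x‖ ^ β)) x
        = (-(K * ‖x‖ ^ (β - 2))) • x := fun x => (hgrad x).gradient
  have hdiffψ : Differentiable ℝ (fun x : EuclideanSpace ℝ (Fin N) => c * (R ^ β - ‖x‖ ^ β)) :=
    fun x => (hgrad x).hasFDerivAt.differentiableAt
  have hflux : ∀ x : EuclideanSpace ℝ (Fin N),
      flux p (fun x : EuclideanSpace ℝ (Fin N) => c * (R ^ β - ‖x‖ ^ β)) x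
        = (-(‖x‖ ^ α / (α + (N:ℝ)))) • x := by
    intro x
    rw [flux, hgradval x]
    rcases eq_or_ne x 0 with rfl | hx
    · simp
    · have ht : 0 < ‖x‖ := norm_pos_iff.mpr hx
      rw [norm_smul, smul_smul]
      congr 1
      rw [Real.norm_eq_abs, abs_neg, abs_of_pos (by positivity : 0 < K * ‖x‖ ^ (β - 2))]
      have e0 : K * ‖x‖ ^ (β - 2) * ‖x‖ = K * ‖x‖ ^ (β - 1) := by
        rw [mul_assoc, ← Real.rpow_add_one ht.ne', show β - 2 + 1 = β - 1 by ring]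
      have eK : K ^ (p - 2) * K = (α + (N:ℝ))⁻¹ := by
        rw [← Real.rpow_add_one hK.ne', show p - 2 + 1 = p - 1 by ring, hKdef,
          ← Real.rpow_mul hαN.le, show -(1 / (p - 1)) * (p - 1) = -1 by field_simp,
          Real.rpow_neg_one]
      have ex : ‖x‖ ^ ((β - 1) * (p - 2)) * ‖x‖ ^ (β - 2) = ‖x‖ ^ α := by
        rw [← Real.rpow_add ht]
        congr 1
        linear_combination hβp
      rw [e0, Real.mul_rpow hK.le (Real.rpow_nonneg (norm_nonneg _) _),
        ← Real.rpow_mul (norm_nonneg _), div_eq_mul_inv, ← eK, ← ex]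
      ring
  have hVfun : flux p (fun x : EuclideanSpace ℝ (Fin N) => c * (R ^ β - ‖x‖ ^ β))
      = fun x : EuclideanSpace ℝ (Fin N) => (-(α + (N:ℝ))⁻¹) • (‖x‖ ^ α • x) := by
    funext x
    rw [hflux x, smul_smul, div_eq_mul_inv]
    congr 1
    ring
  have hWdiff : Differentiable ℝ (fun y : EuclideanSpace ℝ (Fin N) => ‖y‖ ^ α • y) := by
    intro x
    rcases eq_or_ne x 0 with rfl | hx
    · exact (aux_W_zero α hα).differentiableAt
    · exact ((aux_hasFDerivAt_norm_rpow α hx).smul (hasFDerivAt_id x)).differentiableAt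
  refine ⟨hdiffψ, hflux, ?_, ?_, ?_⟩
  · rw [hVfun]
    exact hWdiff.const_smul (-(α + (N:ℝ))⁻¹)
  · intro x
    rw [hVfun]
    rcases eq_or_ne x 0 with rfl | hx
    · have h0 : fderiv ℝ (fun y : EuclideanSpace ℝ (Fin N) =>
          (-(α + (N:ℝ))⁻¹) • (‖y‖ ^ α • y)) 0 = 0 := by
        have := ((aux_W_zero (N := N) α hα).const_smul (-(α + (N:ℝ))⁻¹)).fderiv
        rw [smul_zero] at this
        exact this
      rw [pdiv, h0]
      simp [Real.zero_rpow hα.ne']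
    · have ht : 0 < ‖x‖ := norm_pos_iff.mpr hx
      have hD := ((aux_hasFDerivAt_norm_rpow α hx).smul (hasFDerivAt_id x)).const_smul
        (-(α + (N:ℝ))⁻¹)
      simp only [id_eq] at hD
      rw [pdiv, show fderiv ℝ (fun y : EuclideanSpace ℝ (Fin N) =>
          (-(α + (N:ℝ))⁻¹) • (‖y‖ ^ α • y)) x = _ from hD.fderiv]
      have hxx : ∑ i : Fin N, x i * x i = ‖x‖ ^ 2 := by
        rw [← real_inner_self_eq_norm_sq]
        simp only [PiLp.inner_apply, RCLike.inner_apply, conj_trivial]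
      have hsum : ∀ i : Fin N,
          ((-(α + (N:ℝ))⁻¹) • (‖x‖ ^ α • ContinuousLinearMap.id ℝ (EuclideanSpace ℝ (Fin N))
            + ((α * ‖x‖ ^ (α - 2)) • innerSL ℝ x).smulRight x)) (EuclideanSpace.single i 1) i
          = (-(α + (N:ℝ))⁻¹) * (‖x‖ ^ α + α * ‖x‖ ^ (α - 2) * (x i * x i)) := by
        intro i
        simp only [ContinuousLinearMap.smul_apply, ContinuousLinearMap.add_apply,
          ContinuousLinearMap.coe_id', id_eq, ContinuousLinearMap.smulRight_apply,
          innerSL_apply_apply, EuclideanSpace.inner_single_right, conj_trivial, one_mul,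
          smul_eq_mul]
        rw [PiLp.smul_apply, PiLp.add_apply, PiLp.smul_apply, PiLp.smul_apply,
          EuclideanSpace.single_apply, if_pos rfl]
        simp only [smul_eq_mul]
        ring
      rw [Finset.sum_congr rfl (fun i _ => hsum i)]
      rw [← Finset.mul_sum, Finset.sum_add_distrib, Finset.sum_const, ← Finset.mul_sum, hxx,
        Finset.card_univ, Fintype.card_fin]
      have e2 : ‖x‖ ^ (α - 2) * ‖x‖ ^ 2 = ‖x‖ ^ α := by
        rw [← Real.rpow_natCast ‖x‖ 2, ← Real.rpow_add ht]
        norm_num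
      rw [mul_assoc, e2]
      field_simp
      ring
  · intro x hx
    show c * (R ^ β - ‖x‖ ^ β) = 0
    rw [hx]
    simp
end

section
/- Let p > 1, let Ω ⊆ ℝ^N be open, and let ψ : Ω → ℝ be C¹ with 0 ≤ ψ(x) ≤ ψ_M := sup_Ω ψ < ∞, whose flux V_ψ is continuously differentiable on Ω with div V_ψ(x) = −1 for all x ∈ Ω. Let f satisfy condition (C), let α > 0 with α·ψ_M < a_f, and let λ > 0 satisfy λ·f(α·ψ_M) ≤ α^{p−1}. Then the flux of ū := α·ψ satisfies V_{ū} = α^{p−1}·V_ψ, is continuously differentiable, and div V_{ū}(x) + λ·f(ū(x)) ≤ 0 for all x ∈ Ω (i.e. ū is a classical supersolution of −Δ_p u = λ f(u)). -/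
open Real Set Metric MeasureTheory

/-- if `ψ ≥ 0` is `C¹` on the open set `Ω` with `ψ_M := sup_Ω ψ < ∞`,
`-Δ_p ψ = 1` on `Ω`, `f` satisfies (C), `α > 0` with `α ψ_M < a_f`, and
`λ f(α ψ_M) ≤ α^(p-1)`, then `ū = α ψ` has flux `α^(p-1) V_ψ`, its flux is continuously
differentiable, and `Δ_p ū + λ f(ū) ≤ 0` on `Ω` (a classical supersolution). -/
theorem stmt10 {N : ℕ} (p : ℝ) (hp : 1 < p)
    (Ω : Set (EuclideanSpace ℝ (Fin N))) (hΩo : IsOpen Ω)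
    (ψ : EuclideanSpace ℝ (Fin N) → ℝ)
    (hψ1 : ContDiffOn ℝ 1 ψ Ω)
    (hψ0 : ∀ x ∈ Ω, 0 ≤ ψ x) (hψbdd : BddAbove (ψ '' Ω))
    (hψflux : ContDiffOn ℝ 1 (flux p ψ) Ω)
    (hψeq : ∀ x ∈ Ω, pdiv (flux p ψ) x = -1)
    (af : EReal) (haf : 0 < af) (f : ℝ → ℝ)
    (hf0 : ∀ t : ℝ, 0 ≤ t → (t : EReal) < af → 0 ≤ f t)
    (hfpos : ∀ t : ℝ, 0 < t → (t : EReal) < af → 0 < f t)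
    (hmono : MonotoneOn f {t : ℝ | 0 ≤ t ∧ (t : EReal) < af})
    (hreg : ContDiffOn ℝ 1 f {t : ℝ | 0 ≤ t ∧ (t : EReal) < af})
    (α : ℝ) (hα : 0 < α)
    (hdom : ((α * sSup (ψ '' Ω) : ℝ) : EReal) < af)
    (lam : ℝ) (hlam : 0 < lam)
    (hle : lam * f (α * sSup (ψ '' Ω)) ≤ α ^ (p - 1)) :
    (∀ x ∈ Ω, flux p (fun y => α * ψ y) x = α ^ (p - 1) • flux p ψ x) ∧
    ContDiffOn ℝ 1 (flux p (fun y => α * ψ y)) Ω ∧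
    ∀ x ∈ Ω, pdiv (flux p (fun y => α * ψ y)) x + lam * f (α * ψ x) ≤ 0 := by
  have hkey : ∀ x ∈ Ω, flux p (fun y => α * ψ y) x = α ^ (p - 1) • flux p ψ x := by
    intro x hx
    have hd : DifferentiableAt ℝ ψ x :=
      (hψ1.contDiffAt (hΩo.mem_nhds hx)).differentiableAt one_ne_zero
    have hgrad : gradient (fun y => α * ψ y) x = α • gradient ψ x := by
      unfold gradient
      rw [fderiv_const_mul hd α, _root_.map_smul]
    rw [flux, flux, hgrad]
    have hng : (0:ℝ) ≤ ‖gradient ψ x‖ := norm_nonneg _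
    rw [norm_smul, Real.norm_eq_abs, abs_of_pos hα,
      Real.mul_rpow hα.le hng, smul_smul, smul_smul]
    congr 1
    have hpow : α ^ (p - 2) * α = α ^ (p - 1) := by
      have h := Real.rpow_add hα (p - 2) 1
      rw [Real.rpow_one] at h
      rw [show p - 2 + 1 = p - 1 by ring] at h
      exact h.symm
    rw [← hpow]
    ring
  have hcd : ContDiffOn ℝ 1 (flux p (fun y => α * ψ y)) Ω :=
    (hψflux.const_smul (α ^ (p - 1))).congr hkey
  refine ⟨hkey, hcd, ?_⟩
  intro x hx
  have hdflux : DifferentiableAt ℝ (flux p ψ) x :=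
    (hψflux.contDiffAt (hΩo.mem_nhds hx)).differentiableAt one_ne_zero
  have heq : flux p (fun y => α * ψ y) =ᶠ[nhds x] fun y => α ^ (p - 1) • flux p ψ y :=
    Filter.eventuallyEq_of_mem (hΩo.mem_nhds hx) hkey
  have hfd : fderiv ℝ (flux p (fun y => α * ψ y)) x
      = α ^ (p - 1) • fderiv ℝ (flux p ψ) x := by
    rw [heq.fderiv_eq, fderiv_fun_const_smul hdflux]
  have hpdiv : pdiv (flux p (fun y => α * ψ y)) x = α ^ (p - 1) * pdiv (flux p ψ) x := by
    unfold pdiv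
    rw [hfd, Finset.mul_sum]
    refine Finset.sum_congr rfl fun i _ => ?_
    simp [PiLp.smul_apply]
  rw [hpdiv, hψeq x hx]
  -- now bound lam * f (α * ψ x) ≤ α ^ (p - 1)
  set M := sSup (ψ '' Ω) with hM
  have hψle : ψ x ≤ M := le_csSup hψbdd ⟨x, hx, rfl⟩
  have h1 : α * ψ x ≤ α * M := by nlinarith
  have h0 : 0 ≤ α * ψ x := mul_nonneg hα.le (hψ0 x hx)
  have hlt : ((α * ψ x : ℝ) : EReal) < af :=
    lt_of_le_of_lt (EReal.coe_le_coe_iff.mpr h1) hdom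
  have h0M : 0 ≤ α * M := le_trans h0 h1
  have hfle : f (α * ψ x) ≤ f (α * M) :=
    hmono ⟨h0, hlt⟩ ⟨h0M, hdom⟩ h1
  have : lam * f (α * ψ x) ≤ α ^ (p - 1) := by
    calc lam * f (α * ψ x) ≤ lam * f (α * M) := by nlinarith
    _ ≤ α ^ (p - 1) := hle
  linarith
end

section
/- Let p > 1, let Ω ⊆ ℝ^N be open, and let ψ : Ω → ℝ be a C² function whose flux is differentiable at a point x ∈ Ω with ∇ψ(x) ≠ 0 and Δ_p ψ(x) = −1. Let f : [0, a_f) → (0, ∞) (0 < a_f ≤ ∞) be a nondecreasing C¹ function with f > 0 on [0, a_f), let F(t) = ∫₀ᵗ f(s)^{−1/(p−1)} ds with ‖F‖_∞ := lim_{t→a_f} F(t), and let α > 0 satisfy 0 < α·ψ(x) and α·ψ(y) < ‖F‖_∞ for y in a neighborhood of x. Then v := F^{−1}∘(α·ψ) is defined near x, its flux is differentiable at x, and Δ_p v(x) = (α^p·f'(v(x))·f(v(x))^{(2−p)/(p−1)}·‖∇ψ(x)‖^p − α^{p−1})·f(v(x)). -/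
open Real Set Metric MeasureTheory

/-- computation of the `p`-Laplacian of `v = F⁻¹ ∘ (α ψ)` at a point `x`
where `∇ψ(x) ≠ 0` and `Δ_p ψ(x) = -1`. Here `f` is positive, nondecreasing and `C¹` on
`[0, a_f)`, `F(t) = ∫₀ᵗ f(s)^(-1/(p-1)) ds`, `Finv` is the inverse of `F` (encoded as a
left inverse on `[0, a_f)`), `0 < α ψ(x)`, and `α ψ(y) < ‖F‖_∞ = sup F` for `y` near `x`
(so that `v` is defined near `x`). -/
theorem stmt11 {N : ℕ} (p : ℝ) (hp : 1 < p)
    (Ω : Set (EuclideanSpace ℝ (Fin N))) (hΩo : IsOpen Ω)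
    (ψ : EuclideanSpace ℝ (Fin N) → ℝ) (hψ : ContDiffOn ℝ 2 ψ Ω)
    (x : EuclideanSpace ℝ (Fin N)) (hx : x ∈ Ω)
    (hgrad : gradient ψ x ≠ 0)
    (hfluxd : DifferentiableAt ℝ (flux p ψ) x)
    (hψeq : pdiv (flux p ψ) x = -1)
    (af : EReal) (haf : 0 < af) (f : ℝ → ℝ)
    (hfpos : ∀ t : ℝ, 0 ≤ t → (t : EReal) < af → 0 < f t)
    (hmono : MonotoneOn f {t : ℝ | 0 ≤ t ∧ (t : EReal) < af})
    (hreg : ContDiffOn ℝ 1 f {t : ℝ | 0 ≤ t ∧ (t : EReal) < af})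
    (F : ℝ → ℝ) (hF : F = fun t => ∫ s in (0:ℝ)..t, f s ^ (-(1 / (p - 1))))
    (Finv : ℝ → ℝ)
    (hFinv : ∀ t : ℝ, 0 ≤ t → (t : EReal) < af → Finv (F t) = t)
    (α : ℝ) (hα : 0 < α) (hαx : 0 < α * ψ x)
    (hnear : ∀ᶠ y in nhds x, ENNReal.ofReal (α * ψ y) <
      ⨆ t ∈ {t : ℝ | 0 ≤ t ∧ (t : EReal) < af}, ENNReal.ofReal (F t)) :
    (∀ᶠ y in nhds x, 0 ≤ Finv (α * ψ y) ∧ ((Finv (α * ψ y) : ℝ) : EReal) < af ∧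
      F (Finv (α * ψ y)) = α * ψ y) ∧
    DifferentiableAt ℝ (flux p (fun y => Finv (α * ψ y))) x ∧
    pdiv (flux p (fun y => Finv (α * ψ y))) x =
      (α ^ p * deriv f (Finv (α * ψ x)) * f (Finv (α * ψ x)) ^ ((2 - p) / (p - 1)) *
          ‖gradient ψ x‖ ^ p - α ^ (p - 1)) * f (Finv (α * ψ x)) := by
  have hp1 : (0:ℝ) < p - 1 := by linarith
  set q : ℝ := -(1 / (p - 1)) with hq
  set D : Set ℝ := {t : ℝ | 0 ≤ t ∧ (t : EReal) < af} with hD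
  set g : ℝ → ℝ := fun s => f s ^ q with hg
  -- D is downward closed within [0, ∞)
  have hDdc : ∀ t ∈ D, ∀ s : ℝ, 0 ≤ s → s ≤ t → s ∈ D := by
    intro t ht s hs0 hst
    exact ⟨hs0, lt_of_le_of_lt (EReal.coe_le_coe_iff.2 hst) ht.2⟩
  -- there is always room above a point of D
  have hroom : ∀ t : ℝ, (t : EReal) < af → ∃ t₁ : ℝ, t < t₁ ∧ (t₁ : EReal) < af := by
    intro t ht
    induction af with
    | bot => exact absurd ht (by simp)
    | coe a =>
        refine ⟨(t + a) / 2, ?_, ?_⟩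
        · have : t < a := EReal.coe_lt_coe_iff.1 ht
          linarith
        · have : t < a := EReal.coe_lt_coe_iff.1 ht
          exact_mod_cast EReal.coe_lt_coe_iff.2 (by linarith)
    | top => exact ⟨t + 1, by linarith, EReal.coe_lt_top _⟩
  -- D contains an open neighborhood of its positive points
  have hDopen : ∀ t : ℝ, 0 < t → (t : EReal) < af →
      ∃ U : Set ℝ, IsOpen U ∧ t ∈ U ∧ U ⊆ D ∧ MeasurableSet U := by
    intro t ht0 htaf
    obtain ⟨t₁, ht₁, ht₁af⟩ := hroom t htaf
    refine ⟨Set.Ioo (0:ℝ) t₁, isOpen_Ioo, ⟨ht0, ht₁⟩, ?_, measurableSet_Ioo⟩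
    intro s hs
    exact ⟨hs.1.le, lt_of_le_of_lt (EReal.coe_le_coe_iff.2 hs.2.le) ht₁af⟩
  have hDnhds : ∀ t : ℝ, 0 < t → (t : EReal) < af → D ∈ nhds t := by
    intro t ht0 htaf
    obtain ⟨U, hUo, htU, hUD, _⟩ := hDopen t ht0 htaf
    exact Filter.mem_of_superset (hUo.mem_nhds htU) hUD
  -- g is continuous and positive on D
  have hgc : ContinuousOn g D := by
    apply ContinuousOn.rpow_const (hreg.continuousOn)
    intro t ht
    exact Or.inl (ne_of_gt (hfpos t ht.1 ht.2))
  have hgpos : ∀ t ∈ D, 0 < g t := fun t ht => Real.rpow_pos_of_pos (hfpos t ht.1 ht.2) q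
  have hInt : ∀ t ∈ D, IntervalIntegrable g MeasureTheory.volume 0 t := by
    intro t ht
    apply ContinuousOn.intervalIntegrable
    apply hgc.mono
    rw [Set.uIcc_of_le ht.1]
    exact fun s hs => hDdc t ht s hs.1 hs.2
  have hF0 : F 0 = 0 := by rw [hF]; simp
  -- F is continuous on Icc 0 t for t ∈ D
  have hFc : ∀ t ∈ D, ContinuousOn F (Set.Icc 0 t) := by
    intro t ht
    rw [hF]
    have := intervalIntegral.continuousOn_primitive_interval
      (f := g) (μ := MeasureTheory.volume) (a := 0) (b := t) ?_
    · rwa [Set.uIcc_of_le ht.1] at this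
    · rw [Set.uIcc_of_le ht.1]
      exact (hgc.mono (fun s hs => hDdc t ht s hs.1 hs.2)).integrableOn_Icc
  -- F is strictly monotone on D
  have hFmono : ∀ a ∈ D, ∀ b ∈ D, a < b → F a < F b := by
    intro a ha b hb hab
    have h1 : IntervalIntegrable g MeasureTheory.volume a b := by
      apply ContinuousOn.intervalIntegrable
      apply hgc.mono
      rw [Set.uIcc_of_le hab.le]
      exact fun s hs => hDdc b hb s (le_trans ha.1 hs.1) hs.2
    have h2 : F b - F a = ∫ s in a..b, g s := by
      rw [hF]
      exact intervalIntegral.integral_interval_sub_left (hInt b hb) (hInt a ha)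
    have h3 : 0 < ∫ s in a..b, g s := by
      apply intervalIntegral.intervalIntegral_pos_of_pos_on h1 _ hab
      intro s hs
      exact hgpos s (hDdc b hb s (le_trans ha.1 hs.1.le) hs.2.le)
    linarith
  have hD0 : (0:ℝ) ∈ D := ⟨le_refl 0, haf⟩
  have hFpos : ∀ t ∈ D, 0 < t → 0 < F t := by
    intro t ht ht0
    have := hFmono 0 hD0 t ht ht0
    rwa [hF0] at this
  -- F has derivative g t at positive points of D
  have hFd : ∀ t : ℝ, 0 < t → (t : EReal) < af → HasDerivAt F (g t) t := by
    intro t ht0 htaf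
    have htD : t ∈ D := ⟨ht0.le, htaf⟩
    have hca : ContinuousAt g t := (hgc.mono (fun s hs => hs)).continuousAt (hDnhds t ht0 htaf)
    rw [hF]
    apply intervalIntegral.integral_hasDerivAt_right (hInt t htD) _ hca
    obtain ⟨U, hUo, htU, hUD, hUm⟩ := hDopen t ht0 htaf
    exact ⟨U, hUo.mem_nhds htU, (hgc.mono hUD).aestronglyMeasurable hUm⟩
  -- IVT helper
  have hivt : ∀ a ∈ D, ∀ b ∈ D, a ≤ b → ∀ s : ℝ, F a ≤ s → s ≤ F b →
      ∃ t ∈ Set.Icc a b, F t = s := by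
    intro a ha b hb hab s h1 h2
    have hcont : ContinuousOn F (Set.Icc a b) :=
      (hFc b hb).mono (Set.Icc_subset_Icc_left ha.1)
    obtain ⟨t, ht, hts⟩ := intermediate_value_Icc hab hcont ⟨h1, h2⟩
    exact ⟨t, ht, hts⟩
  have hsup : ∀ r : ℝ, 0 < r →
      ENNReal.ofReal r < (⨆ t ∈ D, ENNReal.ofReal (F t)) → ∃ T ∈ D, r < F T := by
    intro r hr hlt
    rw [lt_iSup_iff] at hlt
    obtain ⟨T, hT⟩ := hlt
    rw [lt_iSup_iff] at hT
    obtain ⟨hTD, hT⟩ := hT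
    have hFT : 0 < F T := by
      by_contra h
      push_neg at h
      rw [ENNReal.ofReal_eq_zero.2 h] at hT
      exact absurd hT (by simp)
    exact ⟨T, hTD, (ENNReal.ofReal_lt_ofReal_iff hFT).1 hT⟩
  have hmem : ∀ r : ℝ, 0 < r → (∃ T ∈ D, r < F T) →
      ∃ t, 0 < t ∧ t ∈ D ∧ F t = r := by
    rintro r hr ⟨T, hTD, hrT⟩
    obtain ⟨t, htI, hts⟩ := hivt 0 hD0 T hTD hTD.1 r (by rw [hF0]; exact hr.le) hrT.le
    have htD : t ∈ D := hDdc T hTD t htI.1 htI.2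
    have ht0 : 0 < t := by
      rcases lt_or_eq_of_le htI.1 with h | h
      · exact h
      · exfalso; rw [← h, hF0] at hts; exact absurd hts.symm (ne_of_gt hr)
    exact ⟨t, ht0, htD, hts⟩
  have hψc : ContinuousAt ψ x := (hψ.contDiffAt (hΩo.mem_nhds hx)).continuousAt
  have hposev : ∀ᶠ y in nhds x, 0 < α * ψ y := by
    have hc : ContinuousAt (fun y => α * ψ y) x := continuousAt_const.mul hψc
    exact hc.eventually (eventually_gt_nhds hαx)
  have hEv : ∀ᶠ y in nhds x, ∃ t, 0 < t ∧ t ∈ D ∧ F t = α * ψ y := by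
    filter_upwards [hposev, hnear] with y h1 h2
    exact hmem _ h1 (hsup _ h1 h2)
  -- local inverse structure around F t
  have hloc : ∀ t : ℝ, 0 < t → (t : EReal) < af → ∀ ε : ℝ, 0 < ε →
      ∃ δ : ℝ, 0 < δ ∧ ∀ s : ℝ, |s - F t| < δ →
        ∃ u, 0 < u ∧ u ∈ D ∧ F u = s ∧ Finv s = u ∧ |u - t| < ε := by
    intro t ht0 htaf ε hε
    obtain ⟨t₁, ht₁, ht₁af⟩ := hroom t htaf
    set ε' := min (min (ε/2) (t/2)) ((t₁ - t)/2) with hε'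
    have hε'pos : 0 < ε' := by
      apply lt_min (lt_min (by linarith) (by linarith)) (by linarith)
    have hε'le : ε' ≤ ε/2 := le_trans (min_le_left _ _) (min_le_left _ _)
    have hε't : ε' ≤ t/2 := le_trans (min_le_left _ _) (min_le_right _ _)
    have hε't₁ : ε' ≤ (t₁ - t)/2 := min_le_right _ _
    have haD : t - ε' ∈ D := ⟨by linarith, lt_of_le_of_lt
      (EReal.coe_le_coe_iff.2 (by linarith : t - ε' ≤ t)) htaf⟩
    have hbD : t + ε' ∈ D := ⟨by linarith, lt_of_le_of_lt
      (EReal.coe_le_coe_iff.2 (by linarith : t + ε' ≤ t₁)) ht₁af⟩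
    have htD : t ∈ D := ⟨ht0.le, htaf⟩
    have hFa : F (t - ε') < F t := hFmono _ haD _ htD (by linarith)
    have hFb : F t < F (t + ε') := hFmono _ htD _ hbD (by linarith)
    refine ⟨min (F t - F (t - ε')) (F (t + ε') - F t), lt_min (by linarith) (by linarith), ?_⟩
    intro s hs
    rw [abs_sub_lt_iff] at hs
    have hs1 : F (t - ε') < s := by
      have := lt_of_lt_of_le hs.2 (min_le_left _ _); linarith
    have hs2 : s < F (t + ε') := by
      have := lt_of_lt_of_le hs.1 (min_le_right _ _); linarith
    obtain ⟨u, huI, hus⟩ := hivt _ haD _ hbD (by linarith) s hs1.le hs2.le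
    have hu0 : 0 < u := lt_of_lt_of_le (by linarith) huI.1
    have huD : u ∈ D := hDdc _ hbD u hu0.le huI.2
    have hiu : Finv s = u := by rw [← hus, hFinv u huD.1 huD.2]
    refine ⟨u, hu0, huD, hus, hiu, ?_⟩
    rw [abs_sub_lt_iff]
    constructor <;> [skip; skip] <;>
      · have h1 := huI.1; have h2 := huI.2; linarith
  have hFinvC : ∀ t : ℝ, 0 < t → (t : EReal) < af → ContinuousAt Finv (F t) := by
    intro t ht0 htaf
    rw [Metric.continuousAt_iff]
    intro ε hε
    obtain ⟨δ, hδ, hδp⟩ := hloc t ht0 htaf ε hε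
    refine ⟨δ, hδ, ?_⟩
    intro s hs
    rw [Real.dist_eq] at hs ⊢
    obtain ⟨u, _, _, _, hFinvs, hut⟩ := hδp s hs
    rw [hFinvs, hFinv t ht0.le htaf]
    exact hut
  have hFrinv : ∀ t : ℝ, 0 < t → (t : EReal) < af →
      ∀ᶠ s in nhds (F t), F (Finv s) = s := by
    intro t ht0 htaf
    obtain ⟨δ, hδ, hδp⟩ := hloc t ht0 htaf 1 one_pos
    rw [Metric.eventually_nhds_iff]
    refine ⟨δ, hδ, fun s hs => ?_⟩
    obtain ⟨u, _, _, hFu, hFinvs, _⟩ := hδp s (by rwa [Real.dist_eq] at hs)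
    rw [hFinvs, hFu]
  have hFinvd : ∀ t : ℝ, 0 < t → (t : EReal) < af →
      HasDerivAt Finv (g t)⁻¹ (F t) := by
    intro t ht0 htaf
    have h1 : HasDerivAt F (g t) (Finv (F t)) := by
      rw [hFinv t ht0.le htaf]; exact hFd t ht0 htaf
    exact HasDerivAt.of_local_left_inverse (hFinvC t ht0 htaf) h1
      (ne_of_gt (hgpos t ⟨ht0.le, htaf⟩)) (hFrinv t ht0 htaf)
  set v : EuclideanSpace ℝ (Fin N) → ℝ := fun y => Finv (α * ψ y) with hv
  have hψdiff : ∀ y ∈ Ω, HasGradientAt ψ (gradient ψ y) y := fun y hy =>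
    ((hψ.contDiffAt (hΩo.mem_nhds hy)).differentiableAt (by norm_num)).hasGradientAt
  have hvgrad : ∀ᶠ y in nhds x, HasGradientAt v ((α * (g (v y))⁻¹) • gradient ψ y) y ∧
      0 < v y ∧ v y ∈ D ∧ F (v y) = α * ψ y := by
    filter_upwards [hEv, hΩo.eventually_mem hx] with y hty hyΩ
    obtain ⟨t, ht0, htD, hFt⟩ := hty
    have hvy : v y = t := by rw [hv]; simp only; rw [← hFt, hFinv t htD.1 htD.2]
    have hFinv' : HasDerivAt Finv (g t)⁻¹ (α * ψ y) := by
      rw [← hFt]; exact hFinvd t ht0 htD.2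
    have hαψ : HasFDerivAt (fun z => α * ψ z)
        (α • (InnerProductSpace.toDual ℝ _ (gradient ψ y))) y :=
      ((hψdiff y hyΩ).hasFDerivAt).const_mul α
    have hcomp := hFinv'.comp_hasFDerivAt y hαψ
    have heq : (g t)⁻¹ • (α • (InnerProductSpace.toDual ℝ _ (gradient ψ y))) =
        InnerProductSpace.toDual ℝ _ ((α * (g t)⁻¹) • gradient ψ y) := by
      rw [_root_.map_smul, smul_smul, mul_comm]
    rw [heq] at hcomp
    rw [hvy]
    refine ⟨?_, hvy ▸ ht0, hvy ▸ htD, hvy ▸ hFt⟩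
    have h5 := hcomp.hasGradientAt
    rw [LinearIsometryEquiv.symm_apply_apply] at h5
    exact h5
  have hfluxEq : (flux p v) =ᶠ[nhds x] fun y => (α ^ (p-1) * f (v y)) • flux p ψ y := by
    filter_upwards [hvgrad] with y hy
    obtain ⟨hgr, hv0, hvD, _⟩ := hy
    have hGy : gradient v y = (α * (g (v y))⁻¹) • gradient ψ y := hgr.gradient
    rw [flux, flux, hGy]
    set G := gradient ψ y with hGdef
    by_cases hG : G = 0
    · simp [hG]
    · set c : ℝ := α * (g (v y))⁻¹ with hc
      have hfv : 0 < f (v y) := hfpos _ hvD.1 hvD.2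
      have hgv : 0 < g (v y) := hgpos _ hvD
      have hcpos : 0 < c := by positivity
      have hGpos : 0 < ‖G‖ := norm_pos_iff.2 hG
      have hnorm : ‖c • G‖ = c * ‖G‖ := by
        rw [norm_smul, Real.norm_eq_abs, abs_of_pos hcpos]
      rw [hnorm, Real.mul_rpow hcpos.le (norm_nonneg G), smul_smul, smul_smul]
      congr 1
      -- scalar identity: c^(p-2) * ‖G‖^(p-2) * c = α^(p-1) * f (v y) * ‖G‖^(p-2)
      have key : c ^ (p-2) * c = α ^ (p-1) * f (v y) := by
        have h1 : c ^ (p-2) * c = c ^ (p-1) := by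
          rw [← Real.rpow_add_one (ne_of_gt hcpos) (p-2)]
          congr 1; ring
        have h2 : (g (v y))⁻¹ = f (v y) ^ (1/(p-1)) := by
          rw [hg]; simp only
          rw [← Real.rpow_neg hfv.le, hq]; norm_num
        have h3 : c ^ (p-1) = α ^ (p-1) * (f (v y) ^ (1/(p-1))) ^ (p-1) := by
          rw [hc, h2, Real.mul_rpow hα.le (Real.rpow_nonneg hfv.le _)]
        have h4 : (f (v y) ^ (1/(p-1))) ^ (p-1) = f (v y) := by
          rw [← Real.rpow_mul hfv.le]
          rw [show 1/(p-1) * (p-1) = 1 by field_simp]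
          exact Real.rpow_one _
        rw [h1, h3, h4]
      linear_combination ‖G‖ ^ (p-2) * key
  obtain ⟨t₀, ht₀0, ht₀D, hFt₀⟩ := hEv.self_of_nhds
  have hvx : v x = t₀ := by rw [hv]; simp only; rw [← hFt₀, hFinv t₀ ht₀D.1 ht₀D.2]
  have hgrx0 := hvgrad.self_of_nhds
  have hgrx : HasGradientAt v ((α * (g t₀)⁻¹) • gradient ψ x) x := by
    have := hgrx0.1; rwa [hvx] at this
  set G₀ : EuclideanSpace ℝ (Fin N) := gradient ψ x with hG₀
  set c₀ : ℝ := α * (g t₀)⁻¹ with hc₀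
  have hft₀ : 0 < f t₀ := hfpos t₀ ht₀D.1 ht₀D.2
  have hG₀pos : 0 < ‖G₀‖ := norm_pos_iff.2 hgrad
  have hfd : HasDerivAt f (deriv f t₀) t₀ :=
    ((hreg.contDiffAt (hDnhds t₀ ht₀0 ht₀D.2)).differentiableAt one_ne_zero).hasDerivAt
  have hfvd : HasFDerivAt (fun y => f (v y))
      ((deriv f t₀) • (InnerProductSpace.toDual ℝ _ (c₀ • G₀))) x := by
    have := hfd.comp_hasFDerivAt_of_eq x hgrx.hasFDerivAt hvx.symm
    simpa [Function.comp_def] using this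
  have hh : HasFDerivAt (fun y => α ^ (p-1) * f (v y))
      ((α ^ (p-1)) • ((deriv f t₀) • (InnerProductSpace.toDual ℝ _ (c₀ • G₀)))) x :=
    hfvd.const_mul _
  have hW : HasFDerivAt (fun y => (α ^ (p-1) * f (v y)) • flux p ψ y)
      ((α ^ (p-1) * f (v x)) • (fderiv ℝ (flux p ψ) x) +
        ((α ^ (p-1)) • ((deriv f t₀) • (InnerProductSpace.toDual ℝ _ (c₀ • G₀)))).smulRight
          (flux p ψ x)) x := hh.smul hfluxd.hasFDerivAt
  have hdiffv : DifferentiableAt ℝ (flux p v) x :=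
    (Filter.EventuallyEq.differentiableAt_iff hfluxEq).2 hW.differentiableAt
  refine ⟨?_, hdiffv, ?_⟩
  · filter_upwards [hvgrad] with y hy
    exact ⟨hy.2.2.1.1, hy.2.2.1.2, hy.2.2.2⟩
  -- the divergence computation
  have hinner : ∀ i : Fin N, (inner ℝ (c₀ • G₀) (EuclideanSpace.single i (1:ℝ)) : ℝ)
      = c₀ * G₀ i := by
    intro i
    rw [EuclideanSpace.inner_single_right]
    simp [PiLp.smul_apply, mul_comm]
  have hpdveq : pdiv (flux p v) x
      = ∑ i : Fin N, ((α ^ (p-1) * f (v x)) *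
          (fderiv ℝ (flux p ψ) x (EuclideanSpace.single i 1) i)
          + (α^(p-1) * (deriv f t₀ * (c₀ * G₀ i))) * (‖G₀‖^(p-2) * G₀ i)) := by
    rw [show pdiv (flux p v) x
        = ∑ i : Fin N, fderiv ℝ (flux p v) x (EuclideanSpace.single i 1) i from rfl]
    rw [hfluxEq.fderiv_eq, hW.fderiv]
    apply Finset.sum_congr rfl
    intro i _
    simp only [ContinuousLinearMap.add_apply, PiLp.add_apply,
      ContinuousLinearMap.smul_apply, ContinuousLinearMap.smulRight_apply,
      InnerProductSpace.toDual_apply_apply, PiLp.smul_apply, smul_eq_mul]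
    rw [hinner i, show flux p ψ x i = ‖G₀‖ ^ (p-2) * G₀ i from rfl]
  have hsum1 : ∑ i : Fin N, (α ^ (p-1) * f (v x)) *
      (fderiv ℝ (flux p ψ) x (EuclideanSpace.single i 1) i) = -(α ^ (p-1) * f t₀) := by
    rw [← Finset.mul_sum,
      show (∑ i : Fin N, fderiv ℝ (flux p ψ) x (EuclideanSpace.single i 1) i)
        = pdiv (flux p ψ) x from rfl, hψeq, hvx]
    ring
  have hsum3 : ∑ i : Fin N, G₀ i * G₀ i = ‖G₀‖^2 := by
    have h1 : (inner ℝ G₀ G₀ : ℝ) = ∑ i : Fin N, G₀ i * G₀ i := by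
      rw [PiLp.inner_apply]
      simp [RCLike.inner_apply, mul_comm, sq]
    rw [← h1, real_inner_self_eq_norm_sq]
  have hsum2 : ∑ i : Fin N, (α^(p-1) * (deriv f t₀ * (c₀ * G₀ i))) * (‖G₀‖^(p-2) * G₀ i)
      = α^(p-1) * deriv f t₀ * c₀ * (‖G₀‖^(p-2) * ‖G₀‖^2) := by
    rw [← hsum3]
    simp only [Finset.mul_sum]
    apply Finset.sum_congr rfl
    intro i _
    ring
  have hvx' : Finv (α * ψ x) = t₀ := hvx
  have i1 : (g t₀)⁻¹ = f t₀ ^ (1/(p-1)) := by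
    rw [hg]; simp only
    rw [← Real.rpow_neg hft₀.le, hq]; norm_num
  have i2 : ‖G₀‖^(p-2) * ‖G₀‖^2 = ‖G₀‖^p := by
    rw [← Real.rpow_natCast ‖G₀‖ 2, ← Real.rpow_add hG₀pos]
    norm_num
  have i3 : α^(p-1) * α = α^p := by
    rw [← Real.rpow_add_one (ne_of_gt hα) (p-1)]
    norm_num
  have i4 : f t₀ ^ ((2-p)/(p-1)) * f t₀ = f t₀ ^ (1/(p-1)) := by
    rw [← Real.rpow_add_one (ne_of_gt hft₀) ((2-p)/(p-1))]
    congr 1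
    field_simp
    norm_num
  rw [hpdveq, Finset.sum_add_distrib, hsum1, hsum2, i2, hvx', hc₀, i1]
  linear_combination (deriv f t₀ * f t₀ ^ (1/(p-1)) * ‖G₀‖^p) * i3
    - (α^p * deriv f t₀ * ‖G₀‖^p) * i4
end

section
/- Let N > p > 1 and define u(x) = −p·log‖x‖ for x ∈ ℝ^N with 0 < ‖x‖ < 1. Then u is differentiable on the punctured unit ball, its flux at every such x equals −p^{p−1}·x/‖x‖^p, this flux vector field is differentiable with −Δ_p u(x) = p^{p−1}·(N−p)·‖x‖^{−p} = p^{p−1}·(N−p)·e^{u(x)} for all 0 < ‖x‖ < 1, and u(x) = 0 whenever ‖x‖ = 1. -/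
open Real Set Metric MeasureTheory

variable {N : ℕ}
local notation "E" => EuclideanSpace ℝ (Fin N)

lemma hasFDerivAt_sq (x : E) :
    HasFDerivAt (fun y : E => (inner ℝ y y : ℝ)) ((2:ℝ) • innerSL ℝ x) x := by
  have h := (hasFDerivAt_id x).inner ℝ (hasFDerivAt_id x)
  refine h.congr_fderiv ?_
  ext h'
  simp [real_inner_comm, two_smul, fderivInnerCLM, mul_comm]

lemma hasGradientAt_u {p : ℝ} {x : E} (hx : x ≠ 0) :
    HasGradientAt (fun y : E => -p * Real.log ‖y‖) ((-p * (‖x‖^2)⁻¹) • x) x := by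
  have hn : (0:ℝ) < ‖x‖ := norm_pos_iff.mpr hx
  have hq : (inner ℝ x x : ℝ) ≠ 0 := by
    rw [real_inner_self_eq_norm_sq]; positivity
  have h1 : HasFDerivAt (fun y : E => (-p/2) * Real.log (inner ℝ y y : ℝ))
      ((-p/2) • ((inner ℝ x x : ℝ)⁻¹ • ((2:ℝ) • innerSL ℝ x))) x :=
    ((Real.hasDerivAt_log hq).comp_hasFDerivAt (f := fun y : E => (inner ℝ y y : ℝ)) x (hasFDerivAt_sq x)).const_mul (-p/2)
  have heq : (fun y : E => -p * Real.log ‖y‖) =ᶠ[nhds x]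
      (fun y : E => (-p/2) * Real.log (inner ℝ y y : ℝ)) := by
    filter_upwards [IsOpen.mem_nhds isOpen_ne hx] with y hy
    have hny : (0:ℝ) < ‖y‖ := norm_pos_iff.mpr hy
    rw [real_inner_self_eq_norm_sq, Real.log_pow]
    push_cast; ring
  have h2 : HasFDerivAt (fun y : E => -p * Real.log ‖y‖)
      ((-p/2) • ((inner ℝ x x : ℝ)⁻¹ • ((2:ℝ) • innerSL ℝ x))) x :=
    h1.congr_of_eventuallyEq heq
  rw [hasGradientAt_iff_hasFDerivAt]
  refine h2.congr_fderiv ?_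
  ext h'
  rw [real_inner_self_eq_norm_sq] at *
  simp [InnerProductSpace.toDual_apply_apply, real_inner_smul_left]
  ring

lemma flux_eq {p : ℝ} (hp : 0 < p) {y : E} (hy : y ≠ 0) :
    flux p (fun z : E => -p * Real.log ‖z‖) y = (-(p ^ (p-1) / ‖y‖ ^ p)) • y := by
  have ha : (0:ℝ) < ‖y‖ := norm_pos_iff.mpr hy
  have hg := (hasGradientAt_u (p := p) hy).gradient
  rw [flux, hg, norm_smul, smul_smul]
  congr 1
  rw [Real.norm_eq_abs, abs_mul, abs_neg, abs_of_pos hp, abs_inv,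
    abs_of_pos (by positivity : (0:ℝ) < ‖y‖^2)]
  set a := ‖y‖ with hadef
  have h1 : p * (a^2)⁻¹ * a = p * a⁻¹ := by field_simp
  rw [h1, Real.mul_rpow hp.le (by positivity), Real.inv_rpow ha.le]
  have h2 : p ^ (p-2) * p = p ^ (p-1) := by
    rw [← Real.rpow_add_one hp.ne']; congr 1; ring
  have h3 : (a ^ (p-2))⁻¹ * (a^2)⁻¹ = (a ^ p)⁻¹ := by
    rw [← mul_inv, show (a:ℝ)^2 = a^((2:ℝ)) from by
      rw [← Real.rpow_natCast a 2]; norm_num, ← Real.rpow_add ha]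
    congr 2; ring
  calc p ^ (p-2) * (a ^ (p-2))⁻¹ * (-p * (a^2)⁻¹)
      = -((p ^ (p-2) * p) * ((a ^ (p-2))⁻¹ * (a^2)⁻¹)) := by ring
    _ = -(p ^ (p-1) / a ^ p) := by rw [h2, h3]; ring

lemma flux_diff {p : ℝ} (hp : 0 < p) {x : E} (hx : x ≠ 0) :
    DifferentiableAt ℝ (flux p (fun z : E => -p * Real.log ‖z‖)) x ∧
    pdiv (flux p (fun z : E => -p * Real.log ‖z‖)) x
      = -(p ^ (p-1)) * ((N:ℝ) - p) * ‖x‖ ^ (-p) := by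
  have ha : (0:ℝ) < ‖x‖ := norm_pos_iff.mpr hx
  have hq : (0:ℝ) < (inner ℝ x x : ℝ) := by rw [real_inner_self_eq_norm_sq]; positivity
  set c : ℝ := -(p ^ (p-1)) with hc
  set r : ℝ := -p/2 with hr
  set G : E → E := fun y => (c * (inner ℝ y y : ℝ) ^ r) • y with hG
  -- flux agrees with G near x
  have heq : flux p (fun z : E => -p * Real.log ‖z‖) =ᶠ[nhds x] G := by
    filter_upwards [IsOpen.mem_nhds isOpen_ne hx] with y hy
    have hay : (0:ℝ) < ‖y‖ := norm_pos_iff.mpr hy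
    rw [flux_eq hp hy, hG]
    congr 1
    have h2 : ((‖y‖:ℝ)^2) ^ r = ‖y‖ ^ (2*r) := by
      rw [← Real.rpow_natCast ‖y‖ 2, ← Real.rpow_mul hay.le]; norm_num
    rw [real_inner_self_eq_norm_sq, h2, show 2*r = -p by rw [hr]; ring,
      Real.rpow_neg hay.le, hc]
    ring
  set qx : ℝ := (inner ℝ x x : ℝ) with hqx
  have hs : HasFDerivAt (fun y : E => c * (inner ℝ y y : ℝ) ^ r)
      (c • ((r * qx ^ (r-1)) • ((2:ℝ) • innerSL ℝ x))) x :=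
    ((Real.hasDerivAt_rpow_const (p := r) (Or.inl hq.ne')).comp_hasFDerivAt
      (f := fun y : E => (inner ℝ y y : ℝ)) x (hasFDerivAt_sq x)).const_mul c
  have hGd : HasFDerivAt G
      ((c * qx ^ r) • ContinuousLinearMap.id ℝ E
        + (c • ((r * qx ^ (r-1)) • ((2:ℝ) • innerSL ℝ x))).smulRight x) x :=
    hs.smul (hasFDerivAt_id x)
  have hdiff : DifferentiableAt ℝ (flux p (fun z : E => -p * Real.log ‖z‖)) x :=
    hGd.differentiableAt.congr_of_eventuallyEq heq
  refine ⟨hdiff, ?_⟩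
  have hfd := heq.fderiv_eq.trans hGd.fderiv
  rw [pdiv]
  simp only [hfd, ContinuousLinearMap.add_apply, ContinuousLinearMap.smul_apply,
    ContinuousLinearMap.coe_smul', Pi.smul_apply, ContinuousLinearMap.id_apply,
    ContinuousLinearMap.smulRight_apply, innerSL_apply_apply,
    EuclideanSpace.inner_single_right, conj_trivial, smul_eq_mul,
    PiLp.add_apply, PiLp.smul_apply, EuclideanSpace.single_apply]
  simp only [if_true, mul_one, one_mul]
  have hsum : ∑ i : Fin N, x i * x i = qx := by
    rw [hqx]; simp only [PiLp.inner_apply, RCLike.inner_apply, conj_trivial]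
  have key : qx ^ (r-1) * qx = qx ^ r := by
    nth_rewrite 2 [← Real.rpow_one qx]
    rw [← Real.rpow_add hq]; congr 1; ring
  have hqr : qx ^ r = ‖x‖ ^ (-p) := by
    rw [hqx, real_inner_self_eq_norm_sq, ← Real.rpow_natCast ‖x‖ 2,
      ← Real.rpow_mul ha.le]
    congr 1; rw [hr]; push_cast; ring
  calc ∑ i : Fin N, (c * qx ^ r + c * (r * qx ^ (r-1) * (2 * x i)) * x i)
      = ∑ i : Fin N, (c * qx ^ r + (c * r * 2 * qx ^ (r-1)) * (x i * x i)) :=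
        Finset.sum_congr rfl (fun i _ => by ring)
    _ = (N : ℝ) * (c * qx ^ r) + (c * r * 2 * qx ^ (r-1)) * qx := by
        rw [Finset.sum_add_distrib, Finset.sum_const, Finset.card_univ,
          Fintype.card_fin, nsmul_eq_mul, ← Finset.mul_sum, hsum]
    _ = c * ((N:ℝ) - p) * ‖x‖ ^ (-p) := by
        rw [mul_assoc (c * r * 2), key, hqr, hr]; ring


/-- for `N > p > 1`, the function `u(x) = -p log ‖x‖` on the punctured
unit ball is differentiable, has flux `-p^(p-1) x / ‖x‖^p`, the flux is differentiable,
and `-Δ_p u(x) = p^(p-1) (N-p) ‖x‖^(-p) = p^(p-1) (N-p) e^(u(x))`; moreover `u = 0` on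
the unit sphere. -/
theorem stmt16 {N : ℕ} (p : ℝ) (hp : 1 < p) (hpN : p < (N : ℝ))
    (u : EuclideanSpace ℝ (Fin N) → ℝ)
    (hu : u = fun x => -p * Real.log ‖x‖) :
    (∀ x : EuclideanSpace ℝ (Fin N), 0 < ‖x‖ → ‖x‖ < 1 →
      DifferentiableAt ℝ u x ∧
      flux p u x = (-(p ^ (p - 1) / ‖x‖ ^ p)) • x ∧
      DifferentiableAt ℝ (flux p u) x ∧
      -pdiv (flux p u) x = p ^ (p - 1) * ((N : ℝ) - p) * ‖x‖ ^ (-p) ∧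
      -pdiv (flux p u) x = p ^ (p - 1) * ((N : ℝ) - p) * Real.exp (u x)) ∧
    ∀ x : EuclideanSpace ℝ (Fin N), ‖x‖ = 1 → u x = 0 := by
  subst hu
  have hp0 : (0:ℝ) < p := lt_trans one_pos hp
  constructor
  · intro x hx0 hx1
    have hx : x ≠ 0 := norm_pos_iff.mp hx0
    have h4 : -pdiv (flux p fun x => -p * Real.log ‖x‖) x
        = p ^ (p - 1) * ((N : ℝ) - p) * ‖x‖ ^ (-p) := by
      rw [(flux_diff hp0 hx).2]; ring
    refine ⟨(hasGradientAt_u (p := p) hx).hasFDerivAt.differentiableAt,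
      flux_eq hp0 hx, (flux_diff hp0 hx).1, h4, ?_⟩
    rw [h4]
    congr 1
    rw [Real.rpow_def_of_pos hx0, mul_comm]
  · intro x h1
    simp [h1]
end

section
/- Let p > 1, m > p − 1, N ≥ 1, and define u(x) = ‖x‖^{−p/(m−p+1)} − 1 for x ∈ ℝ^N with 0 < ‖x‖ < 1. Then u is differentiable on the punctured unit ball, its flux is differentiable there, and −Δ_p u(x) = λ̃·(1 + u(x))^m for all 0 < ‖x‖ < 1, where λ̃ = (p/(m+1−p))^{p−1}·(m(N−p) − N(p−1))/(m+1−p); moreover u(x) = 0 whenever ‖x‖ = 1. -/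
open Real Set Metric MeasureTheory

section Aux

variable {N : ℕ}

private lemma myFDerivNormRpow (r : ℝ) (x : EuclideanSpace ℝ (Fin N)) (hx : x ≠ 0) :
    HasFDerivAt (fun y : EuclideanSpace ℝ (Fin N) => ‖y‖ ^ r)
      ((r * ‖x‖ ^ (r - 2)) • innerSL ℝ x) x := by
  have hq : HasFDerivAt (fun y : EuclideanSpace ℝ (Fin N) => ‖y‖ ^ 2)
      (2 • innerSL ℝ x) x := (hasStrictFDerivAt_norm_sq x).hasFDerivAt
  have hn : (0:ℝ) < ‖x‖ := norm_pos_iff.mpr hx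
  have hne : (‖x‖ ^ 2 : ℝ) ≠ 0 := by positivity
  have h := hq.rpow_const (p := r/2) (Or.inl hne)
  have hfun : (fun y : EuclideanSpace ℝ (Fin N) => (‖y‖ ^ 2 : ℝ) ^ (r/2)) =
      fun y => ‖y‖ ^ r := by
    funext y
    rw [← Real.rpow_natCast ‖y‖ 2, ← Real.rpow_mul (norm_nonneg y)]
    congr 1; ring
  rw [hfun] at h
  have hsc : ((‖x‖ ^ 2 : ℝ)) ^ (r/2 - 1) = ‖x‖ ^ (r - 2) := by
    rw [← Real.rpow_natCast ‖x‖ 2, ← Real.rpow_mul (norm_nonneg x)]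
    congr 1
    push_cast; ring
  refine h.congr_fderiv ?_
  rw [hsc]
  ext y
  simp
  ring

private lemma myGradU (r : ℝ) (x : EuclideanSpace ℝ (Fin N)) (hx : x ≠ 0) :
    HasGradientAt (fun y : EuclideanSpace ℝ (Fin N) => ‖y‖ ^ r - 1)
      ((r * ‖x‖ ^ (r - 2)) • x) x := by
  have h := (myFDerivNormRpow r x hx).sub_const 1
  rw [hasGradientAt_iff_hasFDerivAt]
  refine h.congr_fderiv ?_
  ext y
  simp [InnerProductSpace.toDual_apply_apply, inner_smul_left, innerSL_apply_apply]

private lemma myRadial (c β : ℝ) (x : EuclideanSpace ℝ (Fin N)) (hx : x ≠ 0) :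
    DifferentiableAt ℝ (fun y : EuclideanSpace ℝ (Fin N) => (c * ‖y‖ ^ β) • y) x ∧
    pdiv (fun y : EuclideanSpace ℝ (Fin N) => (c * ‖y‖ ^ β) • y) x
      = c * ((N : ℝ) + β) * ‖x‖ ^ β := by
  have hn : (0:ℝ) < ‖x‖ := norm_pos_iff.mpr hx
  have hs : HasFDerivAt (fun y : EuclideanSpace ℝ (Fin N) => c * ‖y‖ ^ β)
      (c • ((β * ‖x‖ ^ (β - 2)) • innerSL ℝ x)) x := (myFDerivNormRpow β x hx).const_mul c
  have hF := hs.smul (hasFDerivAt_id x)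
  simp only [id_eq] at hF
  refine ⟨hF.differentiableAt, ?_⟩
  rw [pdiv]
  have hfd : fderiv ℝ (fun y : EuclideanSpace ℝ (Fin N) => (c * ‖y‖ ^ β) • y) x = _ := hF.fderiv
  rw [hfd]
  simp [EuclideanSpace.single_apply, real_inner_smul_left, PiLp.smul_apply,
    EuclideanSpace.inner_single_right]
  have hsum : ∑ i, x i * x i = ‖x‖ ^ 2 := by
    rw [EuclideanSpace.norm_eq, Real.sq_sqrt (by positivity)]
    exact Finset.sum_congr rfl fun i _ => by rw [Real.norm_eq_abs, sq_abs, sq]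
  have hpow : ‖x‖ ^ (β - 2) * ‖x‖ ^ (2:ℕ) = ‖x‖ ^ β := by
    rw [← Real.rpow_natCast ‖x‖ 2, ← Real.rpow_add hn]
    norm_num
  rw [Finset.sum_add_distrib, Finset.sum_const, Finset.card_univ, Fintype.card_fin,
    nsmul_eq_mul]
  have h2 : ∑ i, c * (β * ‖x‖ ^ (β - 2) * x i) * x i
      = c * β * ‖x‖ ^ (β - 2) * ∑ i, x i * x i := by
    rw [Finset.mul_sum]
    exact Finset.sum_congr rfl fun i _ => by ring
  rw [h2, hsum]
  linear_combination c * β * hpow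

private lemma myFluxEq (p A : ℝ) (hA : 0 < A)
    (y : EuclideanSpace ℝ (Fin N)) (hy : y ≠ 0) :
    flux p (fun z : EuclideanSpace ℝ (Fin N) => ‖z‖ ^ (-A) - 1) y
      = (-(A ^ (p - 1)) * ‖y‖ ^ ((-A - 1) * (p - 1) - 1)) • y := by
  have hny : (0:ℝ) < ‖y‖ := norm_pos_iff.mpr hy
  set α := -A with hα
  set β := (α - 1) * (p - 1) - 1 with hβ
  have hg : gradient (fun z : EuclideanSpace ℝ (Fin N) => ‖z‖ ^ α - 1) y
      = (α * ‖y‖ ^ (α - 2)) • y := (myGradU α y hy).gradient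
  rw [flux, hg, norm_smul, smul_smul]
  congr 1
  have h1 : ‖(α * ‖y‖ ^ (α - 2) : ℝ)‖ = A * ‖y‖ ^ (α - 2) := by
    rw [Real.norm_eq_abs, abs_mul, abs_of_nonpos (by simp [hα, hA.le]),
      abs_of_nonneg (Real.rpow_nonneg (norm_nonneg y) _), hα, neg_neg]
  rw [h1]
  have h2 : (A * ‖y‖ ^ (α - 2) * ‖y‖ : ℝ) = A * ‖y‖ ^ (α - 1) := by
    rw [show α - 1 = α - 2 + 1 by ring, Real.rpow_add_one hny.ne']
    ring
  rw [h2, Real.mul_rpow hA.le (Real.rpow_nonneg (norm_nonneg y) _),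
    ← Real.rpow_mul (norm_nonneg y)]
  have e2 : A ^ (p - 2) * A = A ^ (p - 1) := by
    rw [← Real.rpow_add_one hA.ne']; congr 1; ring
  have e3 : ‖y‖ ^ ((α - 1) * (p - 2)) * ‖y‖ ^ (α - 2) = ‖y‖ ^ β := by
    rw [← Real.rpow_add hny]; congr 1; rw [hβ]; ring
  rw [hα]
  rw [← e2, ← e3]
  ring

end Aux

/-- for `p > 1`, `m > p - 1`, the function `u(x) = ‖x‖^(-p/(m-p+1)) - 1`
on the punctured unit ball is differentiable with differentiable flux and satisfies
`-Δ_p u = λ̃ (1+u)^m` with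
`λ̃ = (p/(m+1-p))^(p-1) (m(N-p) - N(p-1))/(m+1-p)`; moreover `u = 0` on the unit
sphere. -/
theorem stmt17 {N : ℕ} (hN : 1 ≤ N) (p m : ℝ) (hp : 1 < p) (hm : p - 1 < m)
    (u : EuclideanSpace ℝ (Fin N) → ℝ)
    (hu : u = fun x => ‖x‖ ^ (-(p / (m - p + 1))) - 1)
    (lam : ℝ)
    (hlam : lam = (p / (m + 1 - p)) ^ (p - 1) *
      ((m * ((N : ℝ) - p) - (N : ℝ) * (p - 1)) / (m + 1 - p))) :
    (∀ x : EuclideanSpace ℝ (Fin N), 0 < ‖x‖ → ‖x‖ < 1 →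
      DifferentiableAt ℝ u x ∧
      DifferentiableAt ℝ (flux p u) x ∧
      -pdiv (flux p u) x = lam * (1 + u x) ^ m) ∧
    ∀ x : EuclideanSpace ℝ (Fin N), ‖x‖ = 1 → u x = 0 := by
  have hD : (0:ℝ) < m - p + 1 := by linarith
  rw [show m + 1 - p = m - p + 1 by ring] at hlam
  set A := p / (m - p + 1) with hAdef
  have hA : 0 < A := div_pos (by linarith) hD
  set β := (-A - 1) * (p - 1) - 1 with hβ
  set c := -(A ^ (p - 1)) with hc
  constructor
  · intro x hx0 hx1
    have hx : x ≠ 0 := norm_pos_iff.mp hx0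
    have hev : flux p u =ᶠ[nhds x] (fun y => (c * ‖y‖ ^ β) • y) := by
      filter_upwards [eventually_ne_nhds hx] with y hy
      rw [hu]
      exact myFluxEq p A hA y hy
    have hrad := myRadial c β x hx
    refine ⟨?_, ?_, ?_⟩
    · rw [hu]
      exact ((myGradU (-A) x hx).hasFDerivAt).differentiableAt
    · exact hev.differentiableAt_iff.mpr hrad.1
    · have hpd : pdiv (flux p u) x = c * ((N:ℝ) + β) * ‖x‖ ^ β := by
        rw [pdiv, hev.fderiv_eq, ← pdiv]
        exact hrad.2
      rw [hpd]
      have h1u : 1 + u x = ‖x‖ ^ (-A) := by rw [hu]; ring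
      rw [h1u, ← Real.rpow_mul (norm_nonneg x)]
      have hβm : -A * m = β := by
        rw [hβ, hAdef]
        field_simp
        ring
      rw [hβm]
      have hlam' : lam = A ^ (p - 1) * ((N:ℝ) + β) := by
        rw [hlam]
        congr 1
        rw [hβ, hAdef]
        field_simp
        ring
      rw [hlam', hc]
      ring
  · intro x hx
    rw [hu]
    simp [hx]
end
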